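/- Let W ∈ SL(2,ℂ) have lower-left entry c, and let X = [[1,1],[0,1]]. If the subgroup of SL(2,ℂ) generated by X and W is discrete and c ≠ 0, then |c| ≥ 1. -/

import Mathlib

open Matrix

noncomputable def X : Matrix.SpecialLinearGroup (Fin 2) ℂ :=
  ⟨!![1, 1; 0, 1], by simp [Matrix.det_fin_two_of]⟩

noncomputable def Y (μ : ℂ) : Matrix.SpecialLinearGroup (Fin 2) ℂ :=
  ⟨!![1, 0; μ, 1], by simp [Matrix.det_fin_two_of]⟩

noncomputable instance : TopologicalSpace (Matrix.SpecialLinearGroup (Fin 2) ℂ) :=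
  TopologicalSpace.induced ((↑) : Matrix.SpecialLinearGroup (Fin 2) ℂ → Matrix (Fin 2) (Fin 2) ℂ)
    inferInstance

namespace SLaux

abbrev SL2 := Matrix.SpecialLinearGroup (Fin 2) ℂ

lemma conj10 (A : SL2) :
    ((A * X * A⁻¹ : SL2) : Matrix (Fin 2) (Fin 2) ℂ) 1 0
      = -((A : Matrix (Fin 2) (Fin 2) ℂ) 1 0)^2 := by
  rw [Matrix.SpecialLinearGroup.coe_mul, Matrix.SpecialLinearGroup.coe_mul]
  simp [Matrix.SpecialLinearGroup.coe_mul, Matrix.SpecialLinearGroup.coe_inv,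
    Matrix.adjugate_fin_two, Matrix.mul_apply, Fin.sum_univ_two, X]
  ring

lemma conj00 (A : SL2) :
    ((A * X * A⁻¹ : SL2) : Matrix (Fin 2) (Fin 2) ℂ) 0 0
      = 1 - (A : Matrix (Fin 2) (Fin 2) ℂ) 0 0 * (A : Matrix (Fin 2) (Fin 2) ℂ) 1 0 := by
  have hdet : (A : Matrix (Fin 2) (Fin 2) ℂ) 0 0 * A 1 1 - A 0 1 * A 1 0 = 1 := by
    have := A.2; rwa [Matrix.det_fin_two] at this
  rw [Matrix.SpecialLinearGroup.coe_mul, Matrix.SpecialLinearGroup.coe_mul]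
  simp [Matrix.SpecialLinearGroup.coe_mul, Matrix.SpecialLinearGroup.coe_inv,
    Matrix.adjugate_fin_two, Matrix.mul_apply, Fin.sum_univ_two, X]
  linear_combination hdet

lemma conj01 (A : SL2) :
    ((A * X * A⁻¹ : SL2) : Matrix (Fin 2) (Fin 2) ℂ) 0 1
      = ((A : Matrix (Fin 2) (Fin 2) ℂ) 0 0)^2 := by
  rw [Matrix.SpecialLinearGroup.coe_mul, Matrix.SpecialLinearGroup.coe_mul]
  simp [Matrix.SpecialLinearGroup.coe_mul, Matrix.SpecialLinearGroup.coe_inv,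
    Matrix.adjugate_fin_two, Matrix.mul_apply, Fin.sum_univ_two, X]
  ring

lemma conj11 (A : SL2) :
    ((A * X * A⁻¹ : SL2) : Matrix (Fin 2) (Fin 2) ℂ) 1 1
      = 1 + (A : Matrix (Fin 2) (Fin 2) ℂ) 0 0 * (A : Matrix (Fin 2) (Fin 2) ℂ) 1 0 := by
  have hdet : (A : Matrix (Fin 2) (Fin 2) ℂ) 0 0 * A 1 1 - A 0 1 * A 1 0 = 1 := by
    have := A.2; rwa [Matrix.det_fin_two] at this
  rw [Matrix.SpecialLinearGroup.coe_mul, Matrix.SpecialLinearGroup.coe_mul]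
  simp [Matrix.SpecialLinearGroup.coe_mul, Matrix.SpecialLinearGroup.coe_inv,
    Matrix.adjugate_fin_two, Matrix.mul_apply, Fin.sum_univ_two, X]
  linear_combination hdet

/-- The iterated conjugation sequence. -/
noncomputable def f (W : SL2) : ℕ → SL2
  | 0 => W
  | n + 1 => f W n * X * (f W n)⁻¹

end SLaux

open SLaux Filter Topology

/-- Shimizu–Leutbecher: if ⟨X, W⟩ is discrete and the lower-left entry c of W is nonzero,
then |c| ≥ 1. -/
theorem shimizu_leutbecher (W : Matrix.SpecialLinearGroup (Fin 2) ℂ)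
    (hdisc : DiscreteTopology
      (Subgroup.closure ({X, W} : Set (Matrix.SpecialLinearGroup (Fin 2) ℂ))))
    (hc : (W : Matrix (Fin 2) (Fin 2) ℂ) 1 0 ≠ 0) :
    1 ≤ ‖(W : Matrix (Fin 2) (Fin 2) ℂ) 1 0‖ := by
  by_contra hlt
  push_neg at hlt
  set r : ℝ := ‖(W : Matrix (Fin 2) (Fin 2) ℂ) 1 0‖ with hr
  have hr0 : 0 ≤ r := norm_nonneg _
  set H := Subgroup.closure ({X, W} : Set (Matrix.SpecialLinearGroup (Fin 2) ℂ)) with hH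
  -- notation for entries
  set a : ℕ → ℂ := fun n => ((f W n : Matrix (Fin 2) (Fin 2) ℂ) 0 0) with ha
  set c : ℕ → ℂ := fun n => ((f W n : Matrix (Fin 2) (Fin 2) ℂ) 1 0) with hcdef
  have hcrec : ∀ n, c (n + 1) = -(c n)^2 := fun n => conj10 (f W n)
  have harec : ∀ n, a (n + 1) = 1 - a n * c n := fun n => conj00 (f W n)
  -- membership in H
  have hmem : ∀ n, f W n ∈ H := by
    intro n
    induction n with
    | zero => exact Subgroup.subset_closure (by simp [f])
    | succ n ih =>
        exact mul_mem (mul_mem ih (Subgroup.subset_closure (by simp))) (inv_mem ih)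
  -- c n ≠ 0
  have hcne : ∀ n, c n ≠ 0 := by
    intro n
    induction n with
    | zero => exact hc
    | succ n ih => rw [hcrec]; simpa using pow_ne_zero 2 ih
  -- |c n| ≤ r^(n+1)
  have hcbound : ∀ n, ‖c n‖ ≤ r ^ (n + 1) := by
    intro n
    induction n with
    | zero => simp [hcdef, f, hr]
    | succ n ih =>
        rw [hcrec]
        have h1 : ‖-(c n)^2‖ = ‖c n‖ ^ 2 := by
          rw [norm_neg, norm_pow]
        rw [h1]
        calc ‖c n‖ ^ 2 ≤ (r ^ (n+1)) ^ 2 :=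
              pow_le_pow_left₀ (norm_nonneg _) ih 2
          _ = r ^ (n+2) * r ^ n := by ring
          _ ≤ r ^ (n+2) * 1 :=
              mul_le_mul_of_nonneg_left (pow_le_one₀ hr0 hlt.le) (pow_nonneg hr0 _)
          _ = r ^ (n+2) := mul_one _
  -- uniform bound on a
  have hr1 : 0 < 1 - r := by linarith
  set M : ℝ := max (‖a 0‖) (1 / (1 - r)) with hM
  have hM0 : 0 ≤ M := le_trans (norm_nonneg _) (le_max_left _ _)
  have hMr : 1 + M * r ≤ M := by
    have h2 : 1 / (1 - r) ≤ M := le_max_right _ _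
    rw [div_le_iff₀ hr1] at h2
    nlinarith
  have habound : ∀ n, ‖a n‖ ≤ M := by
    intro n
    induction n with
    | zero => exact le_max_left _ _
    | succ n ih =>
        rw [harec]
        have hcr : ‖c n‖ ≤ r := by
          calc ‖c n‖ ≤ r ^ (n+1) := hcbound n
            _ ≤ r ^ 1 := pow_le_pow_of_le_one hr0 hlt.le (by omega)
            _ = r := pow_one r
        calc ‖1 - a n * c n‖ ≤ ‖(1:ℂ)‖ + ‖a n * c n‖ := by
              simpa using norm_sub_le 1 (a n * c n)
          _ = 1 + ‖a n‖ * ‖c n‖ := by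
              rw [norm_one, norm_mul]
          _ ≤ 1 + M * r := by
              have := mul_le_mul ih hcr (norm_nonneg _) hM0
              linarith
          _ ≤ M := hMr
  -- convergence of a n * c n to 0 and c n to 0
  have hrlim : Filter.Tendsto (fun n : ℕ => r ^ (n+1)) Filter.atTop (nhds 0) := by
    have := tendsto_pow_atTop_nhds_zero_of_lt_one hr0 hlt
    exact this.comp (Filter.tendsto_add_atTop_nat 1)
  have hclim : Filter.Tendsto c Filter.atTop (nhds 0) :=
    squeeze_zero_norm (fun n => hcbound n) hrlim
  have haclim : Filter.Tendsto (fun n => a n * c n) Filter.atTop (nhds 0) := by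
    have hb : ∀ n, ‖a n * c n‖ ≤ M * r ^ (n+1) := by
      intro n
      calc ‖a n * c n‖ = ‖a n‖ * ‖c n‖ := by
            rw [norm_mul]
        _ ≤ M * r ^ (n+1) :=
            mul_le_mul (habound n) (hcbound n) (norm_nonneg _) hM0
    exact squeeze_zero_norm hb (by simpa using hrlim.const_mul M)
  have halim : Filter.Tendsto a Filter.atTop (nhds 1) := by
    rw [← Filter.tendsto_add_atTop_iff_nat 1]
    have : Filter.Tendsto (fun n => 1 - a n * c n) Filter.atTop (nhds 1) := by
      simpa using (tendsto_const_nhds (x := (1:ℂ))).sub haclim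
    simpa [harec] using this
  -- convergence of the matrices f W (n+1) to X
  have hmatlim : Filter.Tendsto (fun n => ((f W (n+1) : Matrix (Fin 2) (Fin 2) ℂ)))
      Filter.atTop (nhds (X : Matrix (Fin 2) (Fin 2) ℂ)) := by
    refine tendsto_pi_nhds.2 ?_
    intro i
    rw [tendsto_pi_nhds]
    intro j
    fin_cases i <;> fin_cases j
    · have : ∀ n, ((f W (n+1) : Matrix (Fin 2) (Fin 2) ℂ)) 0 0 = 1 - a n * c n :=
        fun n => conj00 (f W n)
      show Filter.Tendsto (fun n => ((f W (n+1) : Matrix (Fin 2) (Fin 2) ℂ)) 0 0)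
        Filter.atTop (nhds ((X : Matrix (Fin 2) (Fin 2) ℂ) 0 0))
      simp only [this]
      have hX : (X : Matrix (Fin 2) (Fin 2) ℂ) 0 0 = 1 := by simp [X]
      rw [hX]
      simpa using (tendsto_const_nhds (x := (1:ℂ))).sub haclim
    · have : ∀ n, ((f W (n+1) : Matrix (Fin 2) (Fin 2) ℂ)) 0 1 = (a n)^2 :=
        fun n => conj01 (f W n)
      show Filter.Tendsto (fun n => ((f W (n+1) : Matrix (Fin 2) (Fin 2) ℂ)) 0 1)
        Filter.atTop (nhds ((X : Matrix (Fin 2) (Fin 2) ℂ) 0 1))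
      simp only [this]
      have hX : (X : Matrix (Fin 2) (Fin 2) ℂ) 0 1 = 1 := by simp [X]
      rw [hX]
      simpa using halim.pow 2
    · have : ∀ n, ((f W (n+1) : Matrix (Fin 2) (Fin 2) ℂ)) 1 0 = -(c n)^2 :=
        fun n => conj10 (f W n)
      show Filter.Tendsto (fun n => ((f W (n+1) : Matrix (Fin 2) (Fin 2) ℂ)) 1 0)
        Filter.atTop (nhds ((X : Matrix (Fin 2) (Fin 2) ℂ) 1 0))
      simp only [this]
      have hX : (X : Matrix (Fin 2) (Fin 2) ℂ) 1 0 = 0 := by simp [X]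
      rw [hX]
      simpa using (hclim.pow 2).neg
    · have : ∀ n, ((f W (n+1) : Matrix (Fin 2) (Fin 2) ℂ)) 1 1 = 1 + a n * c n :=
        fun n => conj11 (f W n)
      show Filter.Tendsto (fun n => ((f W (n+1) : Matrix (Fin 2) (Fin 2) ℂ)) 1 1)
        Filter.atTop (nhds ((X : Matrix (Fin 2) (Fin 2) ℂ) 1 1))
      simp only [this]
      have hX : (X : Matrix (Fin 2) (Fin 2) ℂ) 1 1 = 1 := by simp [X]
      rw [hX]
      simpa using (tendsto_const_nhds (x := (1:ℂ))).add haclim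
  -- inducing maps
  have hind : Topology.IsInducing
      ((↑) : Matrix.SpecialLinearGroup (Fin 2) ℂ → Matrix (Fin 2) (Fin 2) ℂ) := ⟨rfl⟩
  have hXmem : X ∈ H := Subgroup.subset_closure (by simp)
  have hind2 : Topology.IsInducing (fun h : H =>
      ((h : Matrix.SpecialLinearGroup (Fin 2) ℂ) : Matrix (Fin 2) (Fin 2) ℂ)) :=
    hind.comp Topology.IsInducing.subtypeVal
  have hHlim : Filter.Tendsto (fun n => (⟨f W (n+1), hmem (n+1)⟩ : H)) Filter.atTop
      (nhds (⟨X, hXmem⟩ : H)) := by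
    rw [hind2.tendsto_nhds_iff]
    exact hmatlim
  rw [nhds_discrete, Filter.tendsto_pure] at hHlim
  obtain ⟨n, hn⟩ := hHlim.exists
  have : f W (n+1) = X := congrArg Subtype.val hn
  apply hcne (n+1)
  show ((f W (n+1) : Matrix (Fin 2) (Fin 2) ℂ)) 1 0 = 0
  rw [this]
  simp [X]
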